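/- Let J : ℝ^r × ℝ^r → ℝ be an ℝ-bilinear form and set I(u,v) = J(u,v) + J(v,u). Let f, g : ℝ → ℝ^r be continuously differentiable with g(0) = g(1). Then exp(2πi·∫₀¹ J(f(t), g'(t)) dt) · exp(2πi·∫₀¹ J(g(t), f'(t)) dt)⁻¹ = exp(2πi·(−∫₀¹ I(f'(t), g(t)) dt + J(f(1) − f(0), g(0)))). (With f a lift of a loop φ and g a lift of a based loop γ in T = ℝ^r/ℤ^r, the left-hand side is c(φ,γ)/c(γ,φ); this computes the adjoint action of φ ∈ 𝓛T on the Lie algebra of the central extension, as in the proof of the Lemma comparing c with Pressley–Segal [4.3.2].) -/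

import Mathlib

open Real Complex

/-- The commutator of lifts in the transgressed central extension: for an ℝ-bilinear
form `J` on `ℝ^r` with `I(u,v) = J(u,v) + J(v,u)`, and `f, g : ℝ → ℝ^r` continuously
differentiable with `g(0) = g(1)`:
`c(φ,γ)/c(γ,φ) = exp(2πi·(−∫₀¹ I(f',g) + J(f(1)−f(0), g(0))))`. -/
theorem transgression_adjoint_action (r : ℕ)
    (J : (Fin r → ℝ) →ₗ[ℝ] (Fin r → ℝ) →ₗ[ℝ] ℝ)
    (f g : ℝ → Fin r → ℝ) (hf : ContDiff ℝ 1 f) (hg : ContDiff ℝ 1 g)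
    (hclosed : g 0 = g 1) :
    Complex.exp (2 * Real.pi * Complex.I *
        ((∫ t in (0:ℝ)..1, J (f t) (deriv g t) : ℝ) : ℂ)) *
      (Complex.exp (2 * Real.pi * Complex.I *
        ((∫ t in (0:ℝ)..1, J (g t) (deriv f t) : ℝ) : ℂ)))⁻¹ =
    Complex.exp (2 * Real.pi * Complex.I *
        ((-(∫ t in (0:ℝ)..1, (J (deriv f t) (g t) + J (g t) (deriv f t))) +
          J (f 1 - f 0) (g 0) : ℝ) : ℂ)) := by
  -- continuous bilinear version of J
  let Jc : (Fin r → ℝ) →L[ℝ] (Fin r → ℝ) →L[ℝ] ℝ :=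
    LinearMap.toContinuousLinearMap
      { toFun := fun u => LinearMap.toContinuousLinearMap (J u)
        map_add' := by intro u v; ext w; simp
        map_smul' := by intro c u; ext w; simp }
  have hJc : ∀ u v, Jc u v = J u v := fun u v => rfl
  have hfd : Differentiable ℝ f := hf.differentiable one_ne_zero
  have hgd : Differentiable ℝ g := hg.differentiable one_ne_zero
  have hfc : Continuous f := hfd.continuous
  have hgc : Continuous g := hgd.continuous
  have hf' : Continuous (deriv f) := hf.continuous_deriv le_rfl
  have hg' : Continuous (deriv g) := hg.continuous_deriv le_rfl
  have hder : ∀ t : ℝ, HasDerivAt (fun s => Jc (f s) (g s))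
      (Jc (deriv f t) (g t) + Jc (f t) (deriv g t)) t := by
    intro t
    have h1 : HasDerivAt (fun s => Jc (f s)) (Jc (deriv f t)) t :=
      Jc.hasFDerivAt.comp_hasDerivAt t (hfd t).hasDerivAt
    exact h1.clm_apply (hgd t).hasDerivAt
  have hcont : Continuous (fun t => Jc (deriv f t) (g t) + Jc (f t) (deriv g t)) := by
    fun_prop
  have hfund : (∫ t in (0:ℝ)..1, (Jc (deriv f t) (g t) + Jc (f t) (deriv g t)))
      = Jc (f 1) (g 1) - Jc (f 0) (g 0) :=
    intervalIntegral.integral_eq_sub_of_hasDerivAt (fun t _ => hder t)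
      (hcont.intervalIntegrable 0 1)
  have hsplit : (∫ t in (0:ℝ)..1, (Jc (deriv f t) (g t) + Jc (f t) (deriv g t)))
      = (∫ t in (0:ℝ)..1, Jc (deriv f t) (g t)) + ∫ t in (0:ℝ)..1, Jc (f t) (deriv g t) := by
    apply intervalIntegral.integral_add
    · exact (by fun_prop : Continuous fun t => Jc (deriv f t) (g t)).intervalIntegrable 0 1
    · exact (by fun_prop : Continuous fun t => Jc (f t) (deriv g t)).intervalIntegrable 0 1
  have hsplit2 : (∫ t in (0:ℝ)..1, (J (deriv f t) (g t) + J (g t) (deriv f t)))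
      = (∫ t in (0:ℝ)..1, J (deriv f t) (g t)) + ∫ t in (0:ℝ)..1, J (g t) (deriv f t) := by
    apply intervalIntegral.integral_add
    · exact (by fun_prop : Continuous fun t => Jc (deriv f t) (g t)).intervalIntegrable 0 1
    · exact (by fun_prop : Continuous fun t => Jc (g t) (deriv f t)).intervalIntegrable 0 1
  -- the key real identity
  have key : (∫ t in (0:ℝ)..1, J (f t) (deriv g t)) - (∫ t in (0:ℝ)..1, J (g t) (deriv f t))
      = -(∫ t in (0:ℝ)..1, (J (deriv f t) (g t) + J (g t) (deriv f t)))
        + J (f 1 - f 0) (g 0) := by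
    have h1 : (∫ t in (0:ℝ)..1, J (f t) (deriv g t))
        = Jc (f 1) (g 1) - Jc (f 0) (g 0) - ∫ t in (0:ℝ)..1, J (deriv f t) (g t) := by
      rw [← hfund, hsplit]
      simp [hJc]
    simp only [hJc] at h1
    rw [hsplit2, h1, ← hclosed]
    simp only [map_sub, LinearMap.sub_apply]
    ring
  -- pass to the complex exponentials
  rw [mul_comm, inv_mul_eq_div, ← Complex.exp_sub]
  congr 1
  rw [← mul_sub]
  congr 1
  rw [← Complex.ofReal_sub, key]
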